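/- Let Σ_S, D_1, D_2 be ℓ×ℓ real symmetric matrices with 0 ≺ D_1 ⪯ D_2 ≺ Σ_S (Loewner order), let κ > 0 and 0 < N_1 ≤ N_2. Then P* := min{P ≥ 0 : ℛ₁(Σ_S,D_1,D_2) ⊆ κ·𝒞_G(P,N_1,N_2)} exists and P* = sup over positive definite Σ_Z of [ N_1·(|Σ_S|·|D_1+Σ_Z| / (|D_1|·|D_2+Σ_Z|))^{1/κ} + (N_2−N_1)·(|Σ_S+Σ_Z| / |D_2+Σ_Z|)^{1/κ} − N_2 ]. -/

import Mathlib

open scoped BigOperators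
open Finset

noncomputable section

/-- `κ·𝒜` for a set of rate pairs. -/
def scaleSet (κ : ℝ) (A : Set (ℝ × ℝ)) : Set (ℝ × ℝ) :=
  (fun R : ℝ × ℝ => (κ * R.1, κ * R.2)) '' A

/-- The region `ℛ₁(Σ_S, D₁, D₂)` (convex closure). -/
def RregG1 {l : ℕ} (SS D1 D2 : Matrix (Fin l) (Fin l) ℝ) : Set (ℝ × ℝ) :=
  closure (convexHull ℝ {R : ℝ × ℝ | 0 ≤ R.1 ∧ 0 ≤ R.2 ∧
    ∃ SZ : Matrix (Fin l) (Fin l) ℝ, SZ.PosDef ∧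
      R.1 ≤ (1/2) * Real.logb 2
        (SS.det * (D1 + SZ).det / (D1.det * (SS + SZ).det)) ∧
      R.2 ≤ (1/2) * Real.logb 2 ((SS + SZ).det / (D2 + SZ).det)})

/-- The explicit capacity region `𝒞_G(P, N₁, N₂)` of the scalar Gaussian
broadcast channel. -/
def CG (P N1 N2 : ℝ) : Set (ℝ × ℝ) :=
  {R | 0 ≤ R.1 ∧ 0 ≤ R.2 ∧ ∃ β ∈ Set.Icc (0:ℝ) 1,
    R.1 ≤ (1/2) * Real.logb 2 ((β * P + N1) / N1) ∧
    R.2 ≤ (1/2) * Real.logb 2 ((P + N2) / (β * P + N2))}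

/-! ### Auxiliary matrix lemmas -/

namespace MinPowerAux

open Matrix
open scoped MatrixOrder

variable {n : ℕ}

lemma det_one_add_ge {S : Matrix (Fin n) (Fin n) ℝ} (hS : S.PosSemidef) :
    1 ≤ (1 + S).det := by
  have hT : (1 + S).PosSemidef := Matrix.PosSemidef.add Matrix.PosSemidef.one hS
  have hH := hT.isHermitian
  rw [hH.det_eq_prod_eigenvalues]
  have h1 : ∀ i, 1 ≤ hH.eigenvalues i := by
    intro i
    have hv := hH.eigenvalues_eq i
    set v : Fin n → ℝ := ⇑(hH.eigenvectorBasis i) with hvdef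
    have hnorm : star v ⬝ᵥ v = 1 := by
      have h1 : ‖hH.eigenvectorBasis i‖ = 1 := hH.eigenvectorBasis.orthonormal.1 i
      have h2 : (inner ℝ (hH.eigenvectorBasis i) (hH.eigenvectorBasis i) : ℝ)
          = star v ⬝ᵥ v :=
        (EuclideanSpace.inner_eq_star_dotProduct _ _).trans (dotProduct_comm _ _)
      rw [real_inner_self_eq_norm_sq, h1] at h2
      simpa using h2.symm
    have hSv : 0 ≤ star v ⬝ᵥ (S *ᵥ v) := hS.dotProduct_mulVec_nonneg v
    rw [hv]
    have : star v ⬝ᵥ ((1 + S) *ᵥ v) = 1 + star v ⬝ᵥ (S *ᵥ v) := by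
      rw [add_mulVec, one_mulVec, dotProduct_add, hnorm]
    rw [this]
    simpa using hSv
  calc (1:ℝ) = ∏ _i : Fin n, 1 := by simp
  _ ≤ _ := by
      apply Finset.prod_le_prod (by intros; norm_num)
      intro i _
      simpa using h1 i

lemma exists_sqrt {A : Matrix (Fin n) (Fin n) ℝ} (hA : A.PosDef) :
    ∃ Q : Matrix (Fin n) (Fin n) ℝ, Q.PosSemidef ∧ Q * Q = A ∧ IsUnit Q.det := by
  refine ⟨CFC.sqrt A, (CFC.sqrt_nonneg A).posSemidef,
    CFC.sqrt_mul_sqrt_self A hA.posSemidef.nonneg, ?_⟩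
  have h2 : (CFC.sqrt A).det * (CFC.sqrt A).det = A.det := by
    rw [← det_mul, CFC.sqrt_mul_sqrt_self A hA.posSemidef.nonneg]
  have := hA.det_pos
  rw [isUnit_iff_ne_zero]
  intro h
  rw [h, mul_zero] at h2
  exact this.ne h2

/-- Loewner monotonicity of determinant. -/
lemma det_le_det {A B : Matrix (Fin n) (Fin n) ℝ} (hB : B.PosDef)
    (hAB : (A - B).PosSemidef) : B.det ≤ A.det := by
  obtain ⟨Q, hQ, hQQ, hQd⟩ := exists_sqrt hB
  have hQH : Q⁻¹ᴴ = Q⁻¹ := by rw [conjTranspose_nonsing_inv, hQ.isHermitian.eq]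
  have hS : (Q⁻¹ * (A - B) * Q⁻¹).PosSemidef := by
    have := hAB.conjTranspose_mul_mul_same Q⁻¹
    rwa [hQH] at this
  have hQi : Q * Q⁻¹ = 1 := mul_nonsing_inv Q hQd
  have hQi' : Q⁻¹ * Q = 1 := nonsing_inv_mul Q hQd
  have key : A = Q * (1 + Q⁻¹ * (A - B) * Q⁻¹) * Q := by
    rw [Matrix.mul_add, Matrix.add_mul, Matrix.mul_one, hQQ]
    have : Q * (Q⁻¹ * (A - B) * Q⁻¹) * Q = A - B := by
      rw [← Matrix.mul_assoc, ← Matrix.mul_assoc, hQi, Matrix.one_mul, Matrix.mul_assoc, hQi',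
        Matrix.mul_one]
    rw [this]; abel
  calc B.det = Q.det * 1 * Q.det := by rw [← hQQ, det_mul]; ring
  _ ≤ Q.det * (1 + Q⁻¹ * (A - B) * Q⁻¹).det * Q.det := by
      have h1 := det_one_add_ge hS
      have h2 : 0 < Q.det * Q.det := by
        have : Q.det * Q.det = B.det := by rw [← det_mul, hQQ]
        rw [this]; exact hB.det_pos
      nlinarith
  _ = A.det := by rw [← det_mul, ← det_mul, ← key]

/-- Loewner antitonicity of the inverse. -/
lemma inv_sub_inv_psd {A B : Matrix (Fin n) (Fin n) ℝ} (hB : B.PosDef)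
    (hAB : (A - B).PosSemidef) : (B⁻¹ - A⁻¹).PosSemidef := by
  have hA : A.PosDef := by
    have := hB.add_posSemidef hAB
    rwa [add_sub_cancel] at this
  obtain ⟨Q, hQ, hQQ, hQd⟩ := exists_sqrt hB
  have hQH : Q⁻¹ᴴ = Q⁻¹ := by rw [conjTranspose_nonsing_inv, hQ.isHermitian.eq]
  have hQi : Q * Q⁻¹ = 1 := mul_nonsing_inv Q hQd
  have hQi' : Q⁻¹ * Q = 1 := nonsing_inv_mul Q hQd
  set M := Q⁻¹ * A * Q⁻¹ with hM
  have hMpsd : M.PosSemidef := by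
    have := hA.posSemidef.conjTranspose_mul_mul_same Q⁻¹
    rwa [hQH] at this
  have hAd : IsUnit A.det := isUnit_iff_ne_zero.mpr hA.det_pos.ne'
  have hQid : IsUnit Q⁻¹.det := Q.isUnit_nonsing_inv_det hQd
  have hMd : IsUnit M.det := by
    rw [hM, det_mul, det_mul]
    exact (hQid.mul hAd).mul hQid
  have hMinv : M⁻¹ = Q * A⁻¹ * Q := by
    rw [hM, Matrix.mul_inv_rev, Matrix.mul_inv_rev, nonsing_inv_nonsing_inv Q hQd,
      Matrix.mul_assoc]
  have hMipsd : M⁻¹.PosSemidef := hMpsd.inv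
  have hMid : IsUnit M⁻¹.det := M.isUnit_nonsing_inv_det hMd
  obtain ⟨R, hR, hRR, hRd⟩ :
      ∃ R : Matrix (Fin n) (Fin n) ℝ, R.PosSemidef ∧ R * R = M⁻¹ ∧ IsUnit R.det := by
    refine ⟨CFC.sqrt M⁻¹, (CFC.sqrt_nonneg M⁻¹).posSemidef,
      CFC.sqrt_mul_sqrt_self M⁻¹ hMipsd.nonneg, ?_⟩
    have h2 : (CFC.sqrt M⁻¹).det * (CFC.sqrt M⁻¹).det = M⁻¹.det := by
      rw [← det_mul, CFC.sqrt_mul_sqrt_self M⁻¹ hMipsd.nonneg]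
    exact isUnit_of_mul_isUnit_left (h2.symm ▸ hMid)
  have hRi : R * R⁻¹ = 1 := mul_nonsing_inv R hRd
  have hRi' : R⁻¹ * R = 1 := nonsing_inv_mul R hRd
  have hMR : M = R⁻¹ * R⁻¹ := by
    rw [← Matrix.mul_inv_rev, hRR, nonsing_inv_nonsing_inv M hMd]
  have hRMR : R * M * R = 1 := by
    rw [hMR]
    simp only [Matrix.mul_assoc, hRi']
    simp [hRi]
  have hM1 : (M - 1).PosSemidef := by
    have h := hAB.conjTranspose_mul_mul_same Q⁻¹
    rw [hQH] at h
    have : Q⁻¹ * (A - B) * Q⁻¹ = M - 1 := by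
      rw [Matrix.mul_sub, Matrix.sub_mul, ← hQQ, hM]
      congr 1
      simp only [Matrix.mul_assoc, hQi]
      simp [hQi']
    rwa [this] at h
  have h1M : (1 - M⁻¹).PosSemidef := by
    have h := hM1.conjTranspose_mul_mul_same R
    rw [hR.isHermitian.eq] at h
    have : R * (M - 1) * R = 1 - M⁻¹ := by
      rw [Matrix.mul_sub, Matrix.sub_mul, hRMR, Matrix.mul_one, hRR]
    rwa [this] at h
  have h := h1M.conjTranspose_mul_mul_same Q⁻¹
  rw [hQH] at h
  have : Q⁻¹ * (1 - M⁻¹) * Q⁻¹ = B⁻¹ - A⁻¹ := by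
    rw [Matrix.mul_sub, Matrix.sub_mul, Matrix.mul_one, hMinv]
    congr 1
    · rw [← Matrix.mul_inv_rev, hQQ]
    · rw [← Matrix.mul_assoc, ← Matrix.mul_assoc, hQi', Matrix.one_mul, Matrix.mul_assoc,
        hQi, Matrix.mul_one]
  rwa [this] at h

/-- The key determinant inequality. -/
lemma det_ratio_le {A B Z : Matrix (Fin n) (Fin n) ℝ} (hB : B.PosDef)
    (hAB : (A - B).PosSemidef) (hZ : Z.PosDef) :
    (A + Z).det * B.det ≤ A.det * (B + Z).det := by
  have hA : A.PosDef := by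
    have := hB.add_posSemidef hAB
    rwa [add_sub_cancel] at this
  have hAd : IsUnit A.det := isUnit_iff_ne_zero.mpr hA.det_pos.ne'
  have hBd : IsUnit B.det := isUnit_iff_ne_zero.mpr hB.det_pos.ne'
  obtain ⟨W, hW, hWW, hWd⟩ := exists_sqrt hZ
  have split : ∀ C : Matrix (Fin n) (Fin n) ℝ, C.PosDef →
      (C + Z).det = C.det * (1 + W * C⁻¹ * W).det := by
    intro C hC
    have hCd : IsUnit C.det := isUnit_iff_ne_zero.mpr hC.det_pos.ne'
    have h1 : C + Z = C * (1 + C⁻¹ * Z) := by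
      rw [Matrix.mul_add, Matrix.mul_one, ← Matrix.mul_assoc, mul_nonsing_inv C hCd,
        Matrix.one_mul]
    have h2 : (1 + C⁻¹ * Z).det = (1 + W * C⁻¹ * W).det := by
      rw [← hWW, ← Matrix.mul_assoc]
      rw [det_one_add_mul_comm, Matrix.mul_assoc]
    rw [h1, det_mul, h2]
  have hWA : (1 + W * A⁻¹ * W).PosDef := by
    refine Matrix.PosDef.add_posSemidef Matrix.PosDef.one ?_
    have := hA.posSemidef.inv.conjTranspose_mul_mul_same W
    rwa [hW.isHermitian.eq] at this
  have hdiff : ((1 + W * B⁻¹ * W) - (1 + W * A⁻¹ * W)).PosSemidef := by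
    have h := (inv_sub_inv_psd hB hAB).conjTranspose_mul_mul_same W
    rw [hW.isHermitian.eq] at h
    have : W * (B⁻¹ - A⁻¹) * W = (1 + W * B⁻¹ * W) - (1 + W * A⁻¹ * W) := by
      rw [Matrix.mul_sub, Matrix.sub_mul]; abel
    rwa [this] at h
  have hdet : (1 + W * A⁻¹ * W).det ≤ (1 + W * B⁻¹ * W).det := det_le_det hWA hdiff
  rw [split A hA, split B hB]
  calc A.det * (1 + W * A⁻¹ * W).det * B.det
      = (A.det * B.det) * (1 + W * A⁻¹ * W).det := by ring
    _ ≤ (A.det * B.det) * (1 + W * B⁻¹ * W).det :=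
        mul_le_mul_of_nonneg_left hdet (mul_nonneg hA.det_pos.le hB.det_pos.le)
    _ = A.det * (B.det * (1 + W * B⁻¹ * W).det) := by ring

/-! ### Auxiliary analytic lemmas -/

/-- The exponential-form function whose sublevel set describes the scaled capacity region. -/
def auxG (N1 M a : ℝ) : ℝ × ℝ → ℝ :=
  fun R => N1 * Real.exp (a * R.1 + a * R.2) + M * Real.exp (0 * R.1 + a * R.2)

lemma auxG_eq {κ : ℝ} (hκ : 0 < κ) (N1 M : ℝ) (R : ℝ × ℝ) :
    auxG N1 M (2 * Real.log 2 / κ) R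
      = (N1 * (2:ℝ) ^ (2 * R.1 / κ) + M) * (2:ℝ) ^ (2 * R.2 / κ) := by
  have h1 : (2:ℝ) ^ (2 * R.1 / κ) = Real.exp (2 * Real.log 2 / κ * R.1) := by
    rw [Real.rpow_def_of_pos two_pos]; ring_nf
  have h2 : (2:ℝ) ^ (2 * R.2 / κ) = Real.exp (2 * Real.log 2 / κ * R.2) := by
    rw [Real.rpow_def_of_pos two_pos]; ring_nf
  rw [auxG, h1, h2]
  simp only [zero_mul, zero_add, Real.exp_add]
  ring

lemma cvx_exp_lin (a b : ℝ) :
    ConvexOn ℝ Set.univ (fun R : ℝ × ℝ => Real.exp (a * R.1 + b * R.2)) := by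
  refine ⟨convex_univ, fun x _ y _ s t hs ht hst => ?_⟩
  have key := convexOn_exp.2 (Set.mem_univ (a * x.1 + b * x.2))
    (Set.mem_univ (a * y.1 + b * y.2)) hs ht hst
  simp only [smul_eq_mul] at key ⊢
  have harg : a * (s • x + t • y).1 + b * (s • x + t • y).2
      = s * (a * x.1 + b * x.2) + t * (a * y.1 + b * y.2) := by
    simp [Prod.fst_add, Prod.snd_add]
    ring
  rw [harg]
  exact key

lemma convexOn_auxG {N1 M : ℝ} (hN1 : 0 ≤ N1) (hM : 0 ≤ M) (a : ℝ) :
    ConvexOn ℝ Set.univ (auxG N1 M a) := by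
  have h1 := (cvx_exp_lin a a).smul hN1
  have h2 := (cvx_exp_lin 0 a).smul hM
  exact h1.add h2

lemma continuous_auxG (N1 M a : ℝ) : Continuous (auxG N1 M a) := by
  unfold auxG; fun_prop

lemma CG_mem_iff {P N1 N2 : ℝ} (hN1 : 0 < N1) (hN12 : N1 ≤ N2) (hP : 0 ≤ P)
    (R : ℝ × ℝ) : R ∈ CG P N1 N2 ↔
      0 ≤ R.1 ∧ 0 ≤ R.2 ∧
        (N1 * (2:ℝ) ^ (2 * R.1) + (N2 - N1)) * (2:ℝ) ^ (2 * R.2) ≤ P + N2 := by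
  obtain ⟨x, y⟩ := R
  simp only [CG, Set.mem_setOf_eq]
  have hN2 : 0 < N2 := lt_of_lt_of_le hN1 hN12
  constructor
  · rintro ⟨hx, hy, β, ⟨hβ0, hβ1⟩, h1, h2⟩
    refine ⟨hx, hy, ?_⟩
    have hβP : 0 ≤ β * P := mul_nonneg hβ0 hP
    have c1 : (0:ℝ) < β * P + N1 := by linarith
    have c2 : (0:ℝ) < β * P + N2 := by linarith
    have c3 : (0:ℝ) < P + N2 := by linarith
    have e1 : (2:ℝ) ^ (2 * x) ≤ (β * P + N1) / N1 := by
      have h2x : 2 * x ≤ Real.logb 2 ((β * P + N1) / N1) := by linarith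
      have := Real.rpow_le_rpow_of_exponent_le one_le_two h2x
      rwa [Real.rpow_logb two_pos (by norm_num) (div_pos c1 hN1)] at this
    have e2 : (2:ℝ) ^ (2 * y) ≤ (P + N2) / (β * P + N2) := by
      have h2y : 2 * y ≤ Real.logb 2 ((P + N2) / (β * P + N2)) := by linarith
      have := Real.rpow_le_rpow_of_exponent_le one_le_two h2y
      rwa [Real.rpow_logb two_pos (by norm_num) (div_pos c3 c2)] at this
    have e1' : N1 * (2:ℝ) ^ (2 * x) ≤ β * P + N1 := by
      have := (le_div_iff₀ hN1).mp e1
      linarith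
    have hsum : N1 * (2:ℝ) ^ (2 * x) + (N2 - N1) ≤ β * P + N2 := by linarith
    calc (N1 * (2:ℝ) ^ (2 * x) + (N2 - N1)) * (2:ℝ) ^ (2 * y)
        ≤ (β * P + N2) * ((P + N2) / (β * P + N2)) := by
          apply mul_le_mul hsum e2 (Real.rpow_nonneg (by norm_num) _) c2.le
      _ = P + N2 := by field_simp
  · rintro ⟨hx, hy, hG⟩
    refine ⟨hx, hy, ?_⟩
    have e1 : (1:ℝ) ≤ (2:ℝ) ^ (2 * x) := Real.one_le_rpow one_le_two (by linarith)
    have e2 : (1:ℝ) ≤ (2:ℝ) ^ (2 * y) := Real.one_le_rpow one_le_two (by linarith)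
    have hfac : (0:ℝ) < N1 * (2:ℝ) ^ (2 * x) + (N2 - N1) := by nlinarith
    set u := N1 * (2:ℝ) ^ (2 * x) - N1 with hu
    have hu0 : 0 ≤ u := by nlinarith
    have huP : u ≤ P := by nlinarith
    have hβP : (if P = 0 then (0:ℝ) else u / P) * P = u := by
      rcases eq_or_ne P 0 with h | h
      · rw [if_pos h, zero_mul]
        have : u ≤ 0 := h ▸ huP
        linarith
      · rw [if_neg h]; field_simp
    refine ⟨if P = 0 then 0 else u / P, ?_, ?_, ?_⟩
    · rcases eq_or_ne P 0 with h | h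
      · rw [if_pos h]; exact ⟨le_refl 0, zero_le_one⟩
      · have hP' : 0 < P := lt_of_le_of_ne hP (Ne.symm h)
        rw [if_neg h]
        exact ⟨div_nonneg hu0 hP, (div_le_one hP').mpr huP⟩
    · rw [hβP]
      have harg : (u + N1) / N1 = (2:ℝ) ^ (2 * x) := by
        rw [hu]; field_simp; ring
      rw [harg, Real.logb_rpow two_pos (by norm_num)]
      linarith
    · rw [hβP]
      have harg : u + N2 = N1 * (2:ℝ) ^ (2 * x) + (N2 - N1) := by rw [hu]; ring
      rw [harg]
      have h2y : (2:ℝ) ^ (2 * y) ≤ (P + N2) / (N1 * (2:ℝ) ^ (2 * x) + (N2 - N1)) :=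
        (le_div_iff₀ hfac).mpr (by linarith [hG])
      have hlog := Real.logb_le_logb_of_le (b := 2) one_lt_two
        (Real.rpow_pos_of_pos two_pos _) h2y
      rw [Real.logb_rpow two_pos (by norm_num)] at hlog
      linarith

lemma mem_scaleSet {κ : ℝ} (hκ : 0 < κ) (A : Set (ℝ × ℝ)) (R : ℝ × ℝ) :
    R ∈ scaleSet κ A ↔ (R.1 / κ, R.2 / κ) ∈ A := by
  constructor
  · rintro ⟨S, hS, hEq⟩
    have h1 : R.1 = κ * S.1 := by rw [← hEq]
    have h2 : R.2 = κ * S.2 := by rw [← hEq]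
    have : (R.1 / κ, R.2 / κ) = S := by
      have hκ' := hκ.ne'
      ext <;> simp [h1, h2] <;> field_simp <;> ring
    rwa [this]
  · intro h
    refine ⟨(R.1 / κ, R.2 / κ), h, ?_⟩
    have hκ' := hκ.ne'
    ext <;> simp <;> field_simp <;> ring

lemma scaleSet_CG_mem_iff {κ P N1 N2 : ℝ} (hκ : 0 < κ) (hN1 : 0 < N1) (hN12 : N1 ≤ N2)
    (hP : 0 ≤ P) (R : ℝ × ℝ) :
    R ∈ scaleSet κ (CG P N1 N2) ↔
      0 ≤ R.1 ∧ 0 ≤ R.2 ∧ auxG N1 (N2 - N1) (2 * Real.log 2 / κ) R ≤ P + N2 := by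
  rw [mem_scaleSet hκ, CG_mem_iff hN1 hN12 hP, auxG_eq hκ]
  have e1 : 2 * ((R.1 / κ, R.2 / κ) : ℝ × ℝ).1 = 2 * R.1 / κ := by
    simp; ring
  have e2 : 2 * ((R.1 / κ, R.2 / κ) : ℝ × ℝ).2 = 2 * R.2 / κ := by
    simp; ring
  rw [e1, e2]
  have h1 : 0 ≤ ((R.1 / κ, R.2 / κ) : ℝ × ℝ).1 ↔ 0 ≤ R.1 := by
    simp only []
    constructor
    · intro h; by_contra hc; push_neg at hc
      have : R.1 / κ < 0 := div_neg_of_neg_of_pos hc hκ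
      linarith
    · intro h; exact div_nonneg h hκ.le
  have h2 : 0 ≤ ((R.1 / κ, R.2 / κ) : ℝ × ℝ).2 ↔ 0 ≤ R.2 := by
    simp only []
    constructor
    · intro h; by_contra hc; push_neg at hc
      have : R.2 / κ < 0 := div_neg_of_neg_of_pos hc hκ
      linarith
    · intro h; exact div_nonneg h hκ.le
  rw [h1, h2]

lemma rpow_half_logb {κ A : ℝ} (hκ : 0 < κ) (hA : 0 < A) :
    (2:ℝ) ^ (2 * ((1/2) * Real.logb 2 A) / κ) = A ^ (1/κ) := by
  have h : 2 * ((1/2) * Real.logb 2 A) / κ = Real.logb 2 A * (1/κ) := by ring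
  rw [h, Real.rpow_mul (by norm_num), Real.rpow_logb two_pos (by norm_num) hA]

end MinPowerAux

open MinPowerAux Matrix

set_option maxHeartbeats 1600000

/-- **Equation (73).** The minimal power `P*` for which
`ℛ₁(Σ_S,D₁,D₂) ⊆ κ·𝒞_G(P,N₁,N₂)` exists and equals
`sup_{Σ_Z ≻ 0} N₁(|Σ_S||D₁+Σ_Z|/(|D₁||D₂+Σ_Z|))^{1/κ}
  + (N₂−N₁)(|Σ_S+Σ_Z|/|D₂+Σ_Z|)^{1/κ} − N₂`. -/
theorem minimalPower_formula
    {l : ℕ} (SS D1 D2 : Matrix (Fin l) (Fin l) ℝ)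
    (hD1 : D1.PosDef) (hD12 : (D2 - D1).PosSemidef) (hD2S : (SS - D2).PosDef)
    (κ : ℝ) (hκ : 0 < κ) (N1 N2 : ℝ) (hN1 : 0 < N1) (hN12 : N1 ≤ N2) :
    ∃ Pstar : ℝ,
      IsLeast {P : ℝ | 0 ≤ P ∧ RregG1 SS D1 D2 ⊆ scaleSet κ (CG P N1 N2)} Pstar ∧
      Pstar = sSup {v : ℝ | ∃ SZ : Matrix (Fin l) (Fin l) ℝ, SZ.PosDef ∧
        v = N1 * (SS.det * (D1 + SZ).det / (D1.det * (D2 + SZ).det)) ^ (1/κ)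
              + (N2 - N1) * ((SS + SZ).det / (D2 + SZ).det) ^ (1/κ)
              - N2} := by
  classical
  have hN2 : 0 < N2 := lt_of_lt_of_le hN1 hN12
  have hMnn : 0 ≤ N2 - N1 := by linarith
  set a0 : ℝ := 2 * Real.log 2 / κ with ha0
  have ha0nn : 0 ≤ a0 := by
    rw [ha0]
    have := Real.log_pos one_lt_two
    positivity
  have hD2 : D2.PosDef := by
    have := hD1.add_posSemidef hD12
    rwa [add_sub_cancel] at this
  have hSS : SS.PosDef := by
    have := hD2.add_posSemidef hD2S.posSemidef
    rwa [add_sub_cancel] at this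
  have hSD1 : (SS - D1).PosSemidef := by
    have := hD12.add hD2S.posSemidef
    have e : (D2 - D1) + (SS - D2) = SS - D1 := by abel
    rwa [e] at this
  set Aq : Matrix (Fin l) (Fin l) ℝ → ℝ :=
    fun Z => SS.det * (D1 + Z).det / (D1.det * (SS + Z).det) with hAq
  set Bq : Matrix (Fin l) (Fin l) ℝ → ℝ :=
    fun Z => (SS + Z).det / (D2 + Z).det with hBq
  have facts : ∀ Z : Matrix (Fin l) (Fin l) ℝ, Z.PosDef →
      (0 < Aq Z ∧ 0 < Bq Z ∧ 1 ≤ Aq Z ∧ 1 ≤ Bq Z ∧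
       Aq Z * Bq Z = SS.det * (D1 + Z).det / (D1.det * (D2 + Z).det) ∧
       Aq Z * Bq Z ≤ SS.det / D1.det ∧ Bq Z ≤ SS.det / D2.det) := by
    intro Z hZ
    have p1 : (D1 + Z).PosDef := hD1.add hZ
    have p2 : (D2 + Z).PosDef := hD2.add hZ
    have pS : (SS + Z).PosDef := hSS.add hZ
    have d1 := hD1.det_pos
    have d2 := hD2.det_pos
    have dS := hSS.det_pos
    have d1Z := p1.det_pos
    have d2Z := p2.det_pos
    have dSZ := pS.det_pos
    have m12 : (D1 + Z).det ≤ (D2 + Z).det := by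
      apply MinPowerAux.det_le_det p1
      rw [add_sub_add_right_eq_sub]; exact hD12
    have m2S : (D2 + Z).det ≤ (SS + Z).det := by
      apply MinPowerAux.det_le_det p2
      rw [add_sub_add_right_eq_sub]; exact hD2S.posSemidef
    have k1 : (SS + Z).det * D1.det ≤ SS.det * (D1 + Z).det :=
      MinPowerAux.det_ratio_le hD1 hSD1 hZ
    have k2 : (SS + Z).det * D2.det ≤ SS.det * (D2 + Z).det :=
      MinPowerAux.det_ratio_le hD2 hD2S.posSemidef hZ
    have hA1 : 1 ≤ Aq Z := by
      simp only [hAq]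
      rw [one_le_div (by positivity)]
      linarith [k1]
    have hB1 : 1 ≤ Bq Z := by
      simp only [hBq]
      rw [one_le_div d2Z]
      exact m2S
    have hprod : Aq Z * Bq Z = SS.det * (D1 + Z).det / (D1.det * (D2 + Z).det) := by
      simp only [hAq, hBq]
      field_simp
    refine ⟨by linarith, by linarith, hA1, hB1, hprod, ?_, ?_⟩
    · rw [hprod, div_le_div_iff₀ (by positivity) (by positivity)]
      linarith [mul_le_mul_of_nonneg_left m12 (mul_nonneg dS.le d1.le)]
    · simp only [hBq]
      rw [div_le_div_iff₀ d2Z d2]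
      linarith [k2]
  set cfn : Matrix (Fin l) (Fin l) ℝ → ℝ × ℝ :=
    fun Z => ((1/2) * Real.logb 2 (Aq Z), (1/2) * Real.logb 2 (Bq Z)) with hcfn
  have hcornerG : ∀ Z : Matrix (Fin l) (Fin l) ℝ, Z.PosDef →
      auxG N1 (N2 - N1) a0 (cfn Z)
        = N1 * (Aq Z * Bq Z) ^ (1/κ) + (N2 - N1) * (Bq Z) ^ (1/κ) := by
    intro Z hZ
    obtain ⟨hA0, hB0, -, -, -, -, -⟩ := facts Z hZ
    rw [ha0, auxG_eq hκ]
    simp only [hcfn]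
    rw [MinPowerAux.rpow_half_logb hκ hA0, MinPowerAux.rpow_half_logb hκ hB0,
      Real.mul_rpow hA0.le hB0.le]
    ring
  set V : Set ℝ := {v : ℝ | ∃ SZ : Matrix (Fin l) (Fin l) ℝ, SZ.PosDef ∧
      v = N1 * (SS.det * (D1 + SZ).det / (D1.det * (D2 + SZ).det)) ^ (1/κ)
            + (N2 - N1) * ((SS + SZ).det / (D2 + SZ).det) ^ (1/κ)
            - N2} with hV
  have hvalue : ∀ Z : Matrix (Fin l) (Fin l) ℝ, Z.PosDef →
      N1 * (SS.det * (D1 + Z).det / (D1.det * (D2 + Z).det)) ^ (1/κ)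
        + (N2 - N1) * ((SS + Z).det / (D2 + Z).det) ^ (1/κ) - N2 + N2
        = auxG N1 (N2 - N1) a0 (cfn Z) := by
    intro Z hZ
    obtain ⟨hA0, hB0, -, -, hprod, -, -⟩ := facts Z hZ
    rw [hcornerG Z hZ, ← hprod]
    have : ((SS + Z).det / (D2 + Z).det) = Bq Z := by simp only [hBq]
    rw [this]
    ring
  have hVne : V.Nonempty := ⟨_, 1, Matrix.PosDef.one, rfl⟩
  have hVub : ∀ v ∈ V, v ≤ N1 * (SS.det / D1.det) ^ (1/κ)
      + (N2 - N1) * (SS.det / D2.det) ^ (1/κ) := by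
    rintro v ⟨Z, hZ, rfl⟩
    obtain ⟨hA0, hB0, -, -, hprod, hb1, hb2⟩ := facts Z hZ
    have e1 : (SS.det * (D1 + Z).det / (D1.det * (D2 + Z).det)) ^ (1/κ)
        ≤ (SS.det / D1.det) ^ (1/κ) := by
      rw [← hprod]
      exact Real.rpow_le_rpow (by positivity) hb1 (by positivity)
    have e2 : ((SS + Z).det / (D2 + Z).det) ^ (1/κ) ≤ (SS.det / D2.det) ^ (1/κ) := by
      have : ((SS + Z).det / (D2 + Z).det) = Bq Z := by simp only [hBq]
      rw [this]
      exact Real.rpow_le_rpow (by positivity) hb2 (by positivity)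
    nlinarith [e1, e2, hN1.le, hMnn, hN2]
  have hVbdd : BddAbove V := ⟨_, hVub⟩
  have hVnonneg : ∀ v ∈ V, 0 ≤ v := by
    rintro v ⟨Z, hZ, rfl⟩
    obtain ⟨hA0, hB0, hA1, hB1, hprod, -, -⟩ := facts Z hZ
    have e1 : (1:ℝ) ≤ (SS.det * (D1 + Z).det / (D1.det * (D2 + Z).det)) ^ (1/κ) := by
      rw [← hprod]
      exact Real.one_le_rpow (by nlinarith) (by positivity)
    have e2 : (1:ℝ) ≤ ((SS + Z).det / (D2 + Z).det) ^ (1/κ) := by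
      have : ((SS + Z).det / (D2 + Z).det) = Bq Z := by simp only [hBq]
      rw [this]
      exact Real.one_le_rpow hB1 (by positivity)
    nlinarith [e1, e2, hN1.le, hMnn]
  have hchar : ∀ P : ℝ, 0 ≤ P →
      ((RregG1 SS D1 D2 ⊆ scaleSet κ (CG P N1 N2)) ↔ ∀ v ∈ V, v ≤ P) := by
    intro P hP
    constructor
    · intro h v hv
      obtain ⟨Z, hZ, rfl⟩ := hv
      obtain ⟨hA0, hB0, hA1, hB1, -, -, -⟩ := facts Z hZ
      have hmem : cfn Z ∈ RregG1 SS D1 D2 := by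
        unfold RregG1
        apply subset_closure
        apply subset_convexHull ℝ
        refine ⟨?_, ?_, Z, hZ, ?_, ?_⟩
        · simp only [hcfn]
          have := Real.logb_nonneg one_lt_two hA1
          linarith
        · simp only [hcfn]
          have := Real.logb_nonneg one_lt_two hB1
          linarith
        · simp only [hcfn, hAq]
          exact le_rfl
        · simp only [hcfn, hBq]
          exact le_rfl
      have hR := h hmem
      rw [scaleSet_CG_mem_iff hκ hN1 hN12 hP] at hR
      have h3 : auxG N1 (N2 - N1) a0 (cfn Z) ≤ P + N2 := by
        rw [ha0]; exact hR.2.2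
      have hval := hvalue Z hZ
      linarith
    · intro hub
      have hsetEq : scaleSet κ (CG P N1 N2)
          = {R : ℝ × ℝ | 0 ≤ R.1 ∧ 0 ≤ R.2 ∧ auxG N1 (N2 - N1) a0 R ≤ P + N2} := by
        ext R
        rw [scaleSet_CG_mem_iff hκ hN1 hN12 hP]
        simp only [Set.mem_setOf_eq, ha0]
      rw [hsetEq]
      unfold RregG1
      apply closure_minimal
      swap
      · have : {R : ℝ × ℝ | 0 ≤ R.1 ∧ 0 ≤ R.2 ∧ auxG N1 (N2 - N1) a0 R ≤ P + N2}
            = {R : ℝ × ℝ | 0 ≤ R.1} ∩ {R : ℝ × ℝ | 0 ≤ R.2}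
              ∩ {R : ℝ × ℝ | auxG N1 (N2 - N1) a0 R ≤ P + N2} := by
          ext R
          simp only [Set.mem_setOf_eq, Set.mem_inter_iff]
          tauto
        rw [this]
        exact ((isClosed_le continuous_const continuous_fst).inter
          (isClosed_le continuous_const continuous_snd)).inter
          (isClosed_le (continuous_auxG _ _ _) continuous_const)
      apply convexHull_min
      swap
      · intro x hx y hy s t hs ht hst
        obtain ⟨hx1, hx2, hx3⟩ := hx
        obtain ⟨hy1, hy2, hy3⟩ := hy
        refine ⟨?_, ?_, ?_⟩
        · have : (s • x + t • y).1 = s * x.1 + t * y.1 := by simp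
          rw [this]; positivity
        · have : (s • x + t • y).2 = s * x.2 + t * y.2 := by simp
          rw [this]; positivity
        · have hcv := (convexOn_auxG hN1.le hMnn a0).2 (Set.mem_univ x) (Set.mem_univ y)
            hs ht hst
          simp only [smul_eq_mul] at hcv
          calc auxG N1 (N2 - N1) a0 (s • x + t • y)
              ≤ s * auxG N1 (N2 - N1) a0 x + t * auxG N1 (N2 - N1) a0 y := hcv
            _ ≤ s * (P + N2) + t * (P + N2) := by
                apply add_le_add
                · exact mul_le_mul_of_nonneg_left hx3 hs
                · exact mul_le_mul_of_nonneg_left hy3 ht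
            _ = P + N2 := by rw [← add_mul, hst, one_mul]
      · rintro R ⟨hR1, hR2, Z, hZ, h1, h2⟩
        obtain ⟨hA0, hB0, hA1, hB1, -, -, -⟩ := facts Z hZ
        refine ⟨hR1, hR2, ?_⟩
        have h1' : R.1 ≤ 1 / 2 * Real.logb 2 (Aq Z) := by simp only [hAq]; exact h1
        have h2' : R.2 ≤ 1 / 2 * Real.logb 2 (Bq Z) := by simp only [hBq]; exact h2
        have mono : auxG N1 (N2 - N1) a0 R ≤ auxG N1 (N2 - N1) a0 (cfn Z) := by
          simp only [MinPowerAux.auxG]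
          apply add_le_add
          · apply mul_le_mul_of_nonneg_left _ hN1.le
            apply Real.exp_le_exp.mpr
            have e1 := mul_le_mul_of_nonneg_left h1' ha0nn
            have e2 := mul_le_mul_of_nonneg_left h2' ha0nn
            simp only [hcfn]
            linarith
          · apply mul_le_mul_of_nonneg_left _ hMnn
            apply Real.exp_le_exp.mpr
            have e2 := mul_le_mul_of_nonneg_left h2' ha0nn
            simp only [hcfn, zero_mul, zero_add]
            linarith
        have hvZ : N1 * (SS.det * (D1 + Z).det / (D1.det * (D2 + Z).det)) ^ (1/κ)
            + (N2 - N1) * ((SS + Z).det / (D2 + Z).det) ^ (1/κ) - N2 ≤ P :=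
          hub _ ⟨Z, hZ, rfl⟩
        have hval := hvalue Z hZ
        linarith [mono]
  have hPstar0 : 0 ≤ sSup V := by
    obtain ⟨v0, hv0⟩ := hVne
    exact le_trans (hVnonneg v0 hv0) (le_csSup hVbdd hv0)
  refine ⟨sSup V, ⟨⟨hPstar0, ?_⟩, fun P hP => ?_⟩, rfl⟩
  · exact (hchar (sSup V) hPstar0).2 (fun v hv => le_csSup hVbdd hv)
  · exact csSup_le hVne ((hchar P hP.1).1 hP.2)

end
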